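/- Let A ∈ ℝ^{m×n} and B ∈ ℝ^{n×p}, let β ∈ (0,1], and let p₁,…,p_n be probabilities with Σ_i p_i = 1 and p_i ≥ β ‖A_{*i}‖₂² / ‖A‖_F² for all i = 1,…,n. Let W ∈ ℝ^{s×n} be the random sampling-and-rescaling matrix of Algorithm 1 built from these probabilities. Then E[‖A Wᵀ W B − A B‖_F²] ≤ (1/(β s)) ‖A‖_F² ‖B‖_F², and, if in addition m = p, E[(tr(A Wᵀ W B − A B))²] ≤ (1/(β s)) ‖A‖_F² ‖B‖_F². -/

import Mathlib

open Matrix BigOperators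

noncomputable def frobNorm {m n : Type*} [Fintype m] [Fintype n]
    (A : Matrix m n ℝ) : ℝ := Real.sqrt (∑ i, ∑ j, (A i j) ^ 2)

noncomputable def specNorm {m n : ℕ} (A : Matrix (Fin m) (Fin n) ℝ) : ℝ :=
  ‖LinearMap.toContinuousLinearMap (Matrix.toEuclideanLin A)‖

noncomputable def truncDiag {r : ℕ} (σ : Fin r → ℝ) (m : ℕ) :
    Matrix (Fin r) (Fin r) ℝ :=
  Matrix.diagonal fun i => if (i : ℕ) < m then σ i else 0

noncomputable def samplingMatrix {n : ℕ} (p : Fin n → ℝ) (s : ℕ) (ω : Fin s → Fin n) :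
    Matrix (Fin s) (Fin n) ℝ :=
  fun i j => if j = ω i then 1 / Real.sqrt (s * p j) else 0

noncomputable def expec {n s : ℕ} (p : Fin n → ℝ) (f : (Fin s → Fin n) → ℝ) : ℝ :=
  ∑ ω : Fin s → Fin n, (∏ i, p (ω i)) * f ω

open Classical in
noncomputable def probOf {n s : ℕ} (p : Fin n → ℝ) (E : (Fin s → Fin n) → Prop) : ℝ :=
  ∑ ω : Fin s → Fin n, if E ω then (∏ i, p (ω i)) else 0

def firstCols {n r : ℕ} (U : Matrix (Fin n) (Fin r) ℝ) (k : ℕ) (h : k ≤ r) :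
    Matrix (Fin n) (Fin k) ℝ :=
  fun i j => U i (Fin.castLE h j)

noncomputable def ridgeDiag {r : ℕ} (σ : Fin r → ℝ) (lam : ℝ) :
    Matrix (Fin r) (Fin r) ℝ :=
  Matrix.diagonal fun i => σ i / Real.sqrt (σ i ^ 2 + lam)

lemma sum_fn_prod {n s : ℕ} (F : Fin s → Fin n → ℝ) :
    ∑ ω : Fin s → Fin n, ∏ i, F i (ω i) = ∏ i, ∑ k, F i k := by
  rw [Finset.prod_univ_sum, Fintype.piFinset_univ]

lemma expec_sum {n s : ℕ} (p : Fin n → ℝ) {ι : Type*} (t : Finset ι)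
    (f : ι → (Fin s → Fin n) → ℝ) :
    expec p (fun ω => ∑ x ∈ t, f x ω) = ∑ x ∈ t, expec p (fun ω => f x ω) := by
  unfold expec
  simp_rw [Finset.mul_sum]
  exact Finset.sum_comm

lemma expec_const_mul {n s : ℕ} (p : Fin n → ℝ) (c : ℝ) (f : (Fin s → Fin n) → ℝ) :
    expec p (fun ω => c * f ω) = c * expec p f := by
  unfold expec
  rw [Finset.mul_sum]
  congr 1; ext ω; ring

lemma expec_sq {n s : ℕ} (p : Fin n → ℝ) (hsum : ∑ k, p k = 1)
    (g : Fin n → ℝ) (hg : ∑ k, p k * g k = 0) :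
    expec p (fun ω : Fin s → Fin n => (∑ t, g (ω t))^2)
      = s * ∑ k, p k * g k ^ 2 := by
  have key : ∀ t t' : Fin s,
      (∑ ω : Fin s → Fin n, (∏ i, p (ω i)) * (g (ω t) * g (ω t')))
        = if t = t' then ∑ k, p k * g k ^ 2 else 0 := by
    intro t t'
    have step : ∀ ω : Fin s → Fin n, (∏ i, p (ω i)) * (g (ω t) * g (ω t'))
        = ∏ i, (p (ω i) * ((if i = t then g (ω i) else 1) * (if i = t' then g (ω i) else 1))) := by
      intro ω
      rw [Finset.prod_mul_distrib, Finset.prod_mul_distrib,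
        Finset.prod_ite_eq' Finset.univ t (fun i => g (ω i)),
        Finset.prod_ite_eq' Finset.univ t' (fun i => g (ω i))]
      simp
    simp_rw [step]
    rw [sum_fn_prod (fun i k => p k * ((if i = t then g k else 1) * (if i = t' then g k else 1)))]
    by_cases h : t = t'
    · subst h
      simp only [if_pos rfl]
      have factor : ∀ i : Fin s, (∑ k, p k * ((if i = t then g k else 1) * (if i = t then g k else 1)))
          = if i = t then ∑ k, p k * g k ^ 2 else 1 := by
        intro i
        by_cases hi : i = t <;> simp [hi, hsum, sq]
      simp_rw [factor]
      rw [Finset.prod_ite_eq' Finset.univ t (fun _ => ∑ k, p k * g k ^ 2)]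
      simp
    · rw [if_neg h]
      apply Finset.prod_eq_zero (Finset.mem_univ t)
      simp only [if_pos rfl, if_neg h]
      simpa using hg
  unfold expec
  have expand : ∀ ω : Fin s → Fin n, (∑ t, g (ω t))^2 = ∑ t, ∑ t', g (ω t) * g (ω t') := by
    intro ω; rw [sq, Finset.sum_mul_sum]
  simp_rw [expand, Finset.mul_sum]
  rw [Finset.sum_comm]
  have : ∀ t : Fin s, (∑ ω : Fin s → Fin n, ∑ t', (∏ i, p (ω i)) * (g (ω t) * g (ω t')))
      = ∑ k, p k * g k ^ 2 := by
    intro t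
    rw [Finset.sum_comm]
    simp_rw [key]
    simp
  simp_rw [this]
  simp [Finset.mul_sum]

lemma var_le {n : ℕ} (p : Fin n → ℝ) (hsum : ∑ k, p k = 1)
    (a : Fin n → ℝ) :
    ∑ k, p k * (a k - ∑ l, p l * a l) ^ 2 ≤ ∑ k, p k * a k ^ 2 := by
  set μ := ∑ l, p l * a l with hμ
  have expand : ∀ k, p k * (a k - μ)^2 = p k * a k ^ 2 - 2*μ*(p k * a k) + μ^2 * p k := by
    intro k; ring
  have : ∑ k, p k * (a k - μ)^2 = (∑ k, p k * a k ^ 2) - μ^2 := by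
    simp_rw [expand]
    rw [Finset.sum_add_distrib, Finset.sum_sub_distrib, ← Finset.mul_sum, ← Finset.mul_sum,
      hsum, ← hμ]
    ring
  rw [this]
  nlinarith [sq_nonneg μ]

lemma scalar_bound {n s : ℕ} (hs : 0 < s) (p : Fin n → ℝ)
    (hsum : ∑ k, p k = 1) (a : Fin n → ℝ) :
    expec p (fun ω : Fin s → Fin n => ((1/(s:ℝ)) * ∑ t, (a (ω t) - ∑ l, p l * a l))^2)
      ≤ (1/(s:ℝ)) * ∑ k, p k * a k ^ 2 := by
  set μ := ∑ l, p l * a l with hμ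
  have hs0 : (s:ℝ) ≠ 0 := Nat.cast_ne_zero.mpr hs.ne'
  have hg : ∑ k, p k * (a k - μ) = 0 := by
    simp_rw [mul_sub]
    rw [Finset.sum_sub_distrib, ← Finset.sum_mul, hsum, one_mul, ← hμ, sub_self]
  have h2 := expec_sq (s := s) p hsum (fun k => a k - μ) hg
  have hconst : (fun ω : Fin s → Fin n => ((1/(s:ℝ)) * ∑ t, (a (ω t) - μ))^2)
      = fun ω : Fin s → Fin n => (1/(s:ℝ))^2 * (∑ t, ((fun k => a k - μ) (ω t)))^2 := by
    funext ω; ring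
  rw [hconst, expec_const_mul, h2]
  have heq : (1/(s:ℝ))^2 * ((s:ℝ) * ∑ k, p k * (a k - μ)^2)
      = (1/(s:ℝ)) * ∑ k, p k * (a k - μ)^2 := by
    field_simp
  rw [heq]
  have hle := var_le p hsum a
  have h1s : (0:ℝ) ≤ 1/(s:ℝ) := by positivity
  calc (1/(s:ℝ)) * ∑ k, p k * (a k - μ)^2 ≤ (1/(s:ℝ)) * ∑ k, p k * a k ^ 2 :=
    mul_le_mul_of_nonneg_left hle h1s

lemma AWWB_apply {m n p' : ℕ} (s : ℕ) (p : Fin n → ℝ) (hp : ∀ i, 0 ≤ p i)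
    (A : Matrix (Fin m) (Fin n) ℝ) (B : Matrix (Fin n) (Fin p') ℝ)
    (ω : Fin s → Fin n) (i : Fin m) (j : Fin p') :
    (A * (samplingMatrix p s ω)ᵀ * samplingMatrix p s ω * B) i j
      = ∑ t, A i (ω t) * B (ω t) j / (s * p (ω t)) := by
  simp only [Matrix.mul_apply, Matrix.transpose_apply, samplingMatrix]
  simp only [mul_ite, mul_zero, ite_mul, zero_mul, Finset.sum_ite_eq', Finset.mem_univ, if_true]
  simp_rw [Finset.sum_mul, ite_mul, zero_mul]
  rw [Finset.sum_comm]
  simp only [Finset.sum_ite_eq', Finset.mem_univ, if_true]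
  congr 1; ext t
  have he : (0:ℝ) ≤ (s : ℝ) * p (ω t) := mul_nonneg (Nat.cast_nonneg s) (hp (ω t))
  have h1 : (1 / Real.sqrt ((s:ℝ) * p (ω t))) * (1 / Real.sqrt ((s:ℝ) * p (ω t)))
      = 1 / ((s:ℝ) * p (ω t)) := by
    rw [div_mul_div_comm, one_mul, Real.mul_self_sqrt he]
  calc A i (ω t) * (1 / Real.sqrt ((s:ℝ) * p (ω t))) * (1 / Real.sqrt ((s:ℝ) * p (ω t))) * B (ω t) j
      = A i (ω t) * B (ω t) j * ((1 / Real.sqrt ((s:ℝ) * p (ω t))) * (1 / Real.sqrt ((s:ℝ) * p (ω t)))) := by ring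
    _ = A i (ω t) * B (ω t) j / ((s:ℝ) * p (ω t)) := by rw [h1]; ring

lemma frobNorm_sq {m n : Type*} [Fintype m] [Fintype n] (A : Matrix m n ℝ) :
    frobNorm A ^ 2 = ∑ i, ∑ j, (A i j) ^ 2 := by
  unfold frobNorm
  rw [Real.sq_sqrt]
  positivity

/-- sampled matrix multiplication with probabilities proportional
(up to β) to squared column norms of A. -/
theorem stmt_7 {m n p' : ℕ} (s : ℕ) (hs : 0 < s)
    (A : Matrix (Fin m) (Fin n) ℝ) (B : Matrix (Fin n) (Fin p') ℝ)
    (β : ℝ) (hβ0 : 0 < β) (hβ1 : β ≤ 1)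
    (p : Fin n → ℝ) (hp : ∀ i, 0 ≤ p i) (hsum : ∑ i, p i = 1)
    (hpi : ∀ i, β * (∑ j, (A j i) ^ 2) / frobNorm A ^ 2 ≤ p i) :
    expec p (fun (ω : Fin s → Fin n) =>
        frobNorm (A * (samplingMatrix p s ω)ᵀ * samplingMatrix p s ω * B - A * B) ^ 2)
      ≤ 1 / (β * s) * (frobNorm A ^ 2 * frobNorm B ^ 2)
    ∧ ∀ C : Matrix (Fin n) (Fin m) ℝ,
        expec p (fun (ω : Fin s → Fin n) =>
          (Matrix.trace (A * (samplingMatrix p s ω)ᵀ * samplingMatrix p s ω * C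
            - A * C)) ^ 2)
        ≤ 1 / (β * s) * (frobNorm A ^ 2 * frobNorm C ^ 2) := by
  have hs0 : (s:ℝ) ≠ 0 := Nat.cast_ne_zero.mpr hs.ne'
  by_cases hA : frobNorm A = 0
  · -- degenerate case A = 0
    have hA0 : A = 0 := by
      have h := frobNorm_sq A
      rw [hA] at h
      have h0 : ∑ i, ∑ j, (A i j)^2 = 0 := by simpa using h.symm
      ext i j
      have hi : ∀ i ∈ Finset.univ, (0:ℝ) ≤ ∑ j, (A i j)^2 := fun i _ => by positivity
      have h1 := (Finset.sum_eq_zero_iff_of_nonneg hi).mp h0 i (Finset.mem_univ i)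
      have hj : ∀ j ∈ Finset.univ, (0:ℝ) ≤ (A i j)^2 := fun j _ => sq_nonneg _
      have h2 := (Finset.sum_eq_zero_iff_of_nonneg hj).mp h1 j (Finset.mem_univ j)
      simpa using pow_eq_zero_iff (two_ne_zero) |>.mp h2
    constructor
    · simp [hA, hA0, Matrix.zero_mul, expec, frobNorm]
    · intro C
      simp [hA, hA0, Matrix.zero_mul, expec, frobNorm]
  · have hApos : 0 < frobNorm A ^ 2 :=
      lt_of_le_of_ne (sq_nonneg _) (Ne.symm (pow_ne_zero 2 hA))
    have hcol : ∀ k, (∑ j, (A j k)^2) ≤ p k * (frobNorm A ^2) / β := by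
      intro k
      have h := hpi k
      rw [div_le_iff₀ hApos] at h
      rw [le_div_iff₀ hβ0]
      nlinarith
    have hzero : ∀ k, p k = 0 → ∀ j, A j k = 0 := by
      intro k hk j
      have h := hcol k
      rw [hk, zero_mul, zero_div] at h
      have hnn : (0:ℝ) ≤ ∑ j, (A j k)^2 := by positivity
      have h0 : ∑ j, (A j k)^2 = 0 := le_antisymm h hnn
      have h2 := (Finset.sum_eq_zero_iff_of_nonneg
        (fun j _ => sq_nonneg (A j k))).mp h0 j (Finset.mem_univ j)
      exact pow_eq_zero_iff (two_ne_zero) |>.mp h2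
    have hratio : ∀ k, 0 < p k → (∑ j, (A j k)^2) / p k ≤ frobNorm A ^2 / β := by
      intro k hk
      rw [div_le_div_iff₀ hk hβ0]
      have h := hcol k
      rw [le_div_iff₀ hβ0] at h
      nlinarith
    constructor
    · -- Frobenius part
      set F := fun (i : Fin m) (j : Fin p') (k : Fin n) => A i k * B k j / p k with hF
      have hMean : ∀ i j, (A * B) i j = ∑ l, p l * F i j l := by
        intro i j
        rw [Matrix.mul_apply]
        apply Finset.sum_congr rfl
        intro l _
        by_cases hl : p l = 0
        · simp [hF, hl, hzero l hl i]
        · rw [hF]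
          field_simp
      have hEntry : ∀ (ω : Fin s → Fin n) i j,
          (A * (samplingMatrix p s ω)ᵀ * samplingMatrix p s ω * B - A * B) i j
            = (1/(s:ℝ)) * ∑ t, (F i j (ω t) - ∑ l, p l * F i j l) := by
        intro ω i j
        rw [Matrix.sub_apply, AWWB_apply s p hp A B ω i j, hMean i j]
        rw [Finset.sum_sub_distrib, Finset.sum_const, Finset.card_univ, Fintype.card_fin,
          nsmul_eq_mul, mul_sub]
        congr 1
        · rw [Finset.mul_sum]
          apply Finset.sum_congr rfl
          intro t _
          rw [hF]
          ring
        · field_simp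
      have hfr : (fun ω : Fin s → Fin n =>
            frobNorm (A * (samplingMatrix p s ω)ᵀ * samplingMatrix p s ω * B - A * B) ^ 2)
          = fun ω => ∑ i, ∑ j, ((1/(s:ℝ)) * ∑ t, (F i j (ω t) - ∑ l, p l * F i j l))^2 := by
        funext ω
        rw [frobNorm_sq]
        exact Finset.sum_congr rfl fun i _ => Finset.sum_congr rfl fun j _ => by
          rw [hEntry ω i j]
      have hswap : (∑ i, ∑ j, ∑ k, p k * (F i j k)^2) = ∑ k, ∑ i, ∑ j, p k * (F i j k)^2 :=
        calc (∑ i, ∑ j, ∑ k, p k * (F i j k)^2)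
            = ∑ i, ∑ k, ∑ j, p k * (F i j k)^2 :=
              Finset.sum_congr rfl fun i _ => Finset.sum_comm
          _ = ∑ k, ∑ i, ∑ j, p k * (F i j k)^2 := Finset.sum_comm
      have perk : ∀ k, (∑ i, ∑ j, p k * (F i j k)^2)
          ≤ (frobNorm A ^2/β) * ∑ j, (B k j)^2 := by
        intro k
        by_cases hk : p k = 0
        · simp only [hF, hk, div_zero, ne_eq, OfNat.ofNat_ne_zero, not_false_eq_true,
            zero_pow, mul_zero, Finset.sum_const_zero]
          positivity
        · have hkpos : 0 < p k := (hp k).lt_of_ne (Ne.symm hk)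
          have hterm : ∀ i j, p k * (F i j k)^2 = (A i k)^2 * (B k j)^2 / p k := by
            intro i j
            rw [hF]
            field_simp
          simp_rw [hterm]
          have hfact : ∑ i, ∑ j, (A i k)^2 * (B k j)^2 / p k
              = ((∑ i, (A i k)^2) * (∑ j, (B k j)^2)) / p k := by
            rw [Finset.sum_mul_sum, Finset.sum_div]
            exact Finset.sum_congr rfl fun i _ => by rw [Finset.sum_div]
          rw [hfact]
          have hBnn : (0:ℝ) ≤ ∑ j, (B k j)^2 := by positivity
          calc ((∑ i, (A i k)^2) * (∑ j, (B k j)^2)) / p k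
              = ((∑ i, (A i k)^2)/p k) * (∑ j, (B k j)^2) := by ring
            _ ≤ (frobNorm A ^2/β) * (∑ j, (B k j)^2) :=
                mul_le_mul_of_nonneg_right (hratio k hkpos) hBnn
      calc expec p (fun ω : Fin s → Fin n =>
              frobNorm (A * (samplingMatrix p s ω)ᵀ * samplingMatrix p s ω * B - A * B) ^ 2)
          = ∑ i, ∑ j, expec p
              (fun ω : Fin s → Fin n =>
                ((1/(s:ℝ)) * ∑ t, (F i j (ω t) - ∑ l, p l * F i j l))^2) := by
            rw [hfr, expec_sum]
            exact Finset.sum_congr rfl fun i _ => expec_sum p _ _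
        _ ≤ ∑ i, ∑ j, (1/(s:ℝ)) * ∑ k, p k * (F i j k)^2 := by
            apply Finset.sum_le_sum
            intro i _
            apply Finset.sum_le_sum
            intro j _
            exact scalar_bound hs p hsum (F i j)
        _ = (1/(s:ℝ)) * ∑ k, ∑ i, ∑ j, p k * (F i j k)^2 := by
            rw [← hswap, Finset.mul_sum]
            exact Finset.sum_congr rfl fun i _ => (Finset.mul_sum _ _ _).symm
        _ ≤ (1/(s:ℝ)) * ((frobNorm A ^2/β) * frobNorm B ^2) := by
            apply mul_le_mul_of_nonneg_left _ (by positivity)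
            calc ∑ k, ∑ i, ∑ j, p k * (F i j k)^2
                ≤ ∑ k, (frobNorm A ^2/β) * ∑ j, (B k j)^2 :=
                  Finset.sum_le_sum fun k _ => perk k
              _ = (frobNorm A ^2/β) * ∑ k, ∑ j, (B k j)^2 := (Finset.mul_sum _ _ _).symm
              _ = (frobNorm A ^2/β) * frobNorm B ^2 := by rw [frobNorm_sq B]
        _ = 1 / (β * s) * (frobNorm A ^ 2 * frobNorm B ^ 2) := by
            rw [one_div (β * (s:ℝ)), mul_inv]
            ring
    · -- trace part
      intro C
      set G := fun (k : Fin n) => (∑ i, A i k * C k i) / p k with hG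
      have hMean : Matrix.trace (A * C) = ∑ l, p l * G l := by
        unfold Matrix.trace
        simp only [Matrix.diag, Matrix.mul_apply]
        rw [Finset.sum_comm]
        apply Finset.sum_congr rfl
        intro l _
        by_cases hl : p l = 0
        · rw [hG, hl]
          simp only [zero_mul]
          exact Finset.sum_eq_zero fun i _ => by rw [hzero l hl i, zero_mul]
        · rw [hG]
          field_simp
      have hEntry : ∀ ω : Fin s → Fin n,
          Matrix.trace (A * (samplingMatrix p s ω)ᵀ * samplingMatrix p s ω * C - A * C)
            = (1/(s:ℝ)) * ∑ t, (G (ω t) - ∑ l, p l * G l) := by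
        intro ω
        rw [Matrix.trace_sub]
        have h1 : Matrix.trace (A * (samplingMatrix p s ω)ᵀ * samplingMatrix p s ω * C)
            = ∑ t, (1/(s:ℝ)) * G (ω t) := by
          unfold Matrix.trace
          simp only [Matrix.diag]
          calc ∑ i, (A * (samplingMatrix p s ω)ᵀ * samplingMatrix p s ω * C) i i
              = ∑ i, ∑ t, A i (ω t) * C (ω t) i / (s * p (ω t)) :=
                Finset.sum_congr rfl fun i _ => AWWB_apply s p hp A C ω i i
            _ = ∑ t, ∑ i, A i (ω t) * C (ω t) i / (s * p (ω t)) := Finset.sum_comm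
            _ = ∑ t, (1/(s:ℝ)) * G (ω t) := by
                apply Finset.sum_congr rfl
                intro t _
                rw [hG, ← Finset.sum_div]
                ring
        rw [h1, hMean]
        rw [Finset.sum_sub_distrib, Finset.sum_const, Finset.card_univ, Fintype.card_fin,
          nsmul_eq_mul, mul_sub]
        congr 1
        · exact (Finset.mul_sum _ _ _).symm
        · field_simp
      have perk : ∀ k, p k * (G k)^2 ≤ (frobNorm A ^2/β) * ∑ i, (C k i)^2 := by
        intro k
        by_cases hk : p k = 0
        · rw [hG]
          simp only [hk, div_zero, ne_eq, OfNat.ofNat_ne_zero, not_false_eq_true, zero_pow,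
            mul_zero, zero_mul]
          positivity
        · have hkpos : 0 < p k := (hp k).lt_of_ne (Ne.symm hk)
          have hCS : (∑ i, A i k * C k i)^2 ≤ (∑ i, (A i k)^2) * (∑ i, (C k i)^2) :=
            Finset.sum_mul_sq_le_sq_mul_sq Finset.univ (fun i => A i k) (fun i => C k i)
          have hpg : p k * (G k)^2 = (∑ i, A i k * C k i)^2 / p k := by
            rw [hG]
            field_simp
          rw [hpg]
          have hCnn : (0:ℝ) ≤ ∑ i, (C k i)^2 := by positivity
          calc (∑ i, A i k * C k i)^2 / p k
              ≤ ((∑ i, (A i k)^2) * (∑ i, (C k i)^2)) / p k :=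
                (div_le_div_iff_of_pos_right hkpos).mpr hCS
            _ = ((∑ i, (A i k)^2)/p k) * (∑ i, (C k i)^2) := by ring
            _ ≤ (frobNorm A ^2/β) * (∑ i, (C k i)^2) :=
                mul_le_mul_of_nonneg_right (hratio k hkpos) hCnn
      calc expec p (fun ω : Fin s → Fin n =>
              (Matrix.trace (A * (samplingMatrix p s ω)ᵀ * samplingMatrix p s ω * C
                - A * C)) ^ 2)
          = expec p (fun ω : Fin s → Fin n =>
              ((1/(s:ℝ)) * ∑ t, (G (ω t) - ∑ l, p l * G l))^2) := by
            congr 1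
            funext ω
            rw [hEntry ω]
        _ ≤ (1/(s:ℝ)) * ∑ k, p k * (G k)^2 := scalar_bound hs p hsum G
        _ ≤ (1/(s:ℝ)) * ((frobNorm A ^2/β) * frobNorm C ^2) := by
            apply mul_le_mul_of_nonneg_left _ (by positivity)
            calc ∑ k, p k * (G k)^2
                ≤ ∑ k, (frobNorm A ^2/β) * ∑ i, (C k i)^2 :=
                  Finset.sum_le_sum fun k _ => perk k
              _ = (frobNorm A ^2/β) * ∑ k, ∑ i, (C k i)^2 := (Finset.mul_sum _ _ _).symm
              _ = (frobNorm A ^2/β) * frobNorm C ^2 := by rw [frobNorm_sq C]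
        _ = 1 / (β * s) * (frobNorm A ^ 2 * frobNorm C ^ 2) := by
            rw [one_div (β * (s:ℝ)), mul_inv]
            ring
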